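/- Let P be a pre-Garside structure. For a, b ∈ P there exists a unique maximal left divisor c of b such that the product ac is defined in P (maximal with respect to left divisibility). -/
import Mathlib


/-- An atomic partial product on a set `P`: a partial product (with values in
`Option P`) with a unit, associativity, a finite set of atoms, and an `ℕ`-grading. -/
structure AtomicPartialProduct (P : Type*) where
  mul : P → P → Option P
  one : P
  one_mul : ∀ a, mul one a = some a
  mul_one : ∀ a, mul a one = some a
  /-- `ab` and `(ab)c` are defined iff `bc` and `a(bc)` are defined. -/
  assoc_defined : ∀ a b c : P,
    (∃ ab, mul a b = some ab ∧ (mul ab c).isSome) ↔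
    (∃ bc, mul b c = some bc ∧ (mul a bc).isSome)
  /-- When both are defined, `(ab)c = a(bc)`. -/
  assoc : ∀ a b c ab bc x y : P, mul a b = some ab → mul b c = some bc →
    mul ab c = some x → mul a bc = some y → x = y
  /-- The product of two non-unit elements is a non-unit. -/
  ne_one_mul : ∀ a b c : P, a ≠ one → b ≠ one → mul a b = some c → c ≠ one
  /-- There are finitely many atoms. -/
  atoms_finite : {p : P | p ≠ one ∧ ∀ a b, a ≠ one → b ≠ one → mul a b ≠ some p}.Finite
  len : P → ℕ
  len_pos : ∀ p, p ≠ one → 0 < len p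
  len_mul : ∀ a b c, mul a b = some c → len c = len a + len b

namespace AtomicPartialProduct

variable {P : Type*} (S : AtomicPartialProduct P)

/-- The set of atoms: non-unit elements which are not products of non-units. -/
def atoms : Set P :=
  {p : P | p ≠ S.one ∧ ∀ a b, a ≠ S.one → b ≠ S.one → S.mul a b ≠ some p}

/-- The defining relations of the monoid `M(P)`: `a · b = c` whenever the partial
product `ab` is defined and equal to `c`. -/
def rel : FreeMonoid P → FreeMonoid P → Prop := fun u v =>
  ∃ a b c : P, S.mul a b = some c ∧
    u = FreeMonoid.of a * FreeMonoid.of b ∧ v = FreeMonoid.of c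

/-- The monoid `M(P)` presented by generators `P` and relations `ab = c` whenever
the partial product is defined. -/
def M := (conGen S.rel).Quotient

instance : Monoid S.M := inferInstanceAs (Monoid (conGen S.rel).Quotient)

/-- The natural map `P → M(P)`. -/
def ι (p : P) : S.M := (conGen S.rel).mk' (FreeMonoid.of p)

/-- `a` left-divides `c` in `P`. -/
def leftDvd (a c : P) : Prop := ∃ b, S.mul a b = some c

/-- `a` right-divides `c` in `P`. -/
def rightDvd (a c : P) : Prop := ∃ b, S.mul b a = some c

/-- `Δ` is a least common right multiple of `s` and `t` in `P`. -/
def IsRightLcm (s t Δ : P) : Prop :=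
  S.leftDvd s Δ ∧ S.leftDvd t Δ ∧ ∀ m, S.leftDvd s m → S.leftDvd t m → S.leftDvd Δ m

/-- `Δ` is a least common left multiple of `s` and `t` in `P`. -/
def IsLeftLcm (s t Δ : P) : Prop :=
  S.rightDvd s Δ ∧ S.rightDvd t Δ ∧ ∀ m, S.rightDvd s m → S.rightDvd t m → S.rightDvd Δ m

end AtomicPartialProduct

/-- A pre-Garside structure: an atomic partial product satisfying the lcm axioms
(iv), (iv'), the closure axiom (v) and the cancellativity axiom (vi). -/
structure PreGarside (P : Type*) extends AtomicPartialProduct P where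
  /-- (iv) two atoms with a common right multiple have a right lcm. -/
  lcm_right : ∀ s ∈ toAtomicPartialProduct.atoms, ∀ t ∈ toAtomicPartialProduct.atoms,
    (∃ m, toAtomicPartialProduct.leftDvd s m ∧ toAtomicPartialProduct.leftDvd t m) →
    ∃ Δ, toAtomicPartialProduct.IsRightLcm s t Δ
  /-- (iv') two atoms with a common left multiple have a left lcm. -/
  lcm_left : ∀ s ∈ toAtomicPartialProduct.atoms, ∀ t ∈ toAtomicPartialProduct.atoms,
    (∃ m, toAtomicPartialProduct.rightDvd s m ∧ toAtomicPartialProduct.rightDvd t m) →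
    ∃ Δ, toAtomicPartialProduct.IsLeftLcm s t Δ
  /-- (v) if `as` and `at` are defined then so is `aΔ_{s,t}`. -/
  mul_lcm_defined : ∀ s ∈ toAtomicPartialProduct.atoms, ∀ t ∈ toAtomicPartialProduct.atoms,
    ∀ Δ a : P, toAtomicPartialProduct.IsRightLcm s t Δ →
    (toAtomicPartialProduct.mul a s).isSome → (toAtomicPartialProduct.mul a t).isSome →
    (toAtomicPartialProduct.mul a Δ).isSome
  /-- (vi) elements of `P` are cancellable in `M(P)` (right cancellation). -/
  cancel_right : ∀ (m : toAtomicPartialProduct.M) (a b : P),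
    toAtomicPartialProduct.ι a * m = toAtomicPartialProduct.ι b * m → a = b
  /-- (vi) elements of `P` are cancellable in `M(P)` (left cancellation). -/
  cancel_left : ∀ (m : toAtomicPartialProduct.M) (a b : P),
    m * toAtomicPartialProduct.ι a = m * toAtomicPartialProduct.ι b → a = b

namespace AtomicPartialProduct

variable {P : Type*} {S : AtomicPartialProduct P}

lemma massoc₁ {a b c ab x : P} (h1 : S.mul a b = some ab) (h2 : S.mul ab c = some x) :
    ∃ bc, S.mul b c = some bc ∧ S.mul a bc = some x := by
  obtain ⟨bc, hbc, hs⟩ := (S.assoc_defined a b c).mp ⟨ab, h1, by rw [h2]; rfl⟩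
  obtain ⟨y, hy⟩ := Option.isSome_iff_exists.mp hs
  exact ⟨bc, hbc, by rw [hy, S.assoc a b c ab bc x y h1 hbc h2 hy]⟩

lemma massoc₂ {a b c bc x : P} (h1 : S.mul b c = some bc) (h2 : S.mul a bc = some x) :
    ∃ ab, S.mul a b = some ab ∧ S.mul ab c = some x := by
  obtain ⟨ab, hab, hs⟩ := (S.assoc_defined a b c).mpr ⟨bc, h1, by rw [h2]; rfl⟩
  obtain ⟨y, hy⟩ := Option.isSome_iff_exists.mp hs
  exact ⟨ab, hab, by rw [hy, ← S.assoc a b c ab bc y x hab h1 hy h2]⟩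

lemma leftDvd_trans {a b c : P} (h1 : S.leftDvd a b) (h2 : S.leftDvd b c) :
    S.leftDvd a c := by
  obtain ⟨x, hx⟩ := h1
  obtain ⟨y, hy⟩ := h2
  obtain ⟨z, _, hz⟩ := massoc₁ hx hy
  exact ⟨z, hz⟩

lemma leftDvd_refl (a : P) : S.leftDvd a a := ⟨S.one, S.mul_one a⟩

lemma one_leftDvd (a : P) : S.leftDvd S.one a := ⟨a, S.one_mul a⟩

lemma len_one : S.len S.one = 0 := by
  have := S.len_mul S.one S.one S.one (S.one_mul S.one); omega

lemma eq_one_of_len_eq_zero {e : P} (h : S.len e = 0) : e = S.one := by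
  by_contra he
  have := S.len_pos e he
  omega

lemma leftDvd_len_le {a b : P} (h : S.leftDvd a b) : S.len a ≤ S.len b := by
  obtain ⟨c, hc⟩ := h
  have := S.len_mul a c b hc
  omega

lemma leftDvd_antisymm_len {a b : P} (h : S.leftDvd a b) (hl : S.len b ≤ S.len a) :
    a = b := by
  obtain ⟨c, hc⟩ := h
  have hlm := S.len_mul a c b hc
  have : c = S.one := eq_one_of_len_eq_zero (by omega)
  subst this
  rw [S.mul_one a] at hc
  exact Option.some.inj hc

lemma exists_atom_decomp :
    ∀ n (p : P), S.len p ≤ n → p ≠ S.one → ∃ s ∈ S.atoms, ∃ p', S.mul s p' = some p := by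
  intro n
  induction n with
  | zero => exact fun p hl hp => absurd (S.len_pos p hp) (by omega)
  | succ n ih =>
    intro p hl hp
    by_cases hpa : p ∈ S.atoms
    · exact ⟨p, hpa, S.one, S.mul_one p⟩
    · simp only [atoms, Set.mem_setOf_eq, not_and, not_forall] at hpa
      obtain ⟨u, v, hu, hv, huv⟩ := hpa hp
      rw [not_not] at huv
      have hlu := S.len_mul u v p huv
      have hvpos := S.len_pos v hv
      obtain ⟨s, hs, u', hu'⟩ := ih u (by omega) hu
      obtain ⟨p', hp', hsp'⟩ := massoc₁ hu' huv
      exact ⟨s, hs, p', hsp'⟩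

lemma ι_mul {a b c : P} (h : S.mul a b = some c) : S.ι a * S.ι b = S.ι c := by
  have : ((conGen S.rel).mk' (FreeMonoid.of a) * (conGen S.rel).mk' (FreeMonoid.of b) :
      (conGen S.rel).Quotient) = (conGen S.rel).mk' (FreeMonoid.of c) := by
    rw [← map_mul]
    exact (Con.eq _).mpr (ConGen.Rel.of _ _ ⟨a, b, c, h, rfl, rfl⟩)
  exact this

end AtomicPartialProduct

namespace AtomicPartialProduct

variable {P : Type*} {S : AtomicPartialProduct P}

lemma leftDvd_fiber (hcancel : ∀ t x y m : P, S.mul t x = some m → S.mul t y = some m → x = y)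
    {t x u m m₂ : P} (hu : S.mul t x = some u) (hm : S.mul t m₂ = some m)
    (h : S.leftDvd u m) : S.leftDvd x m₂ := by
  obtain ⟨ρ, hρ⟩ := h
  obtain ⟨z, hz1, hz2⟩ := massoc₁ hu hρ
  rw [hcancel t z m₂ m hz2 hm] at hz1
  exact ⟨ρ, hz1⟩

/-- The key lemma: any two left divisors of a common element have a right lcm,
and the closure axiom (v) extends from atoms to arbitrary lcms. -/
lemma key
    (hlcm : ∀ s ∈ S.atoms, ∀ t ∈ S.atoms,
      (∃ m, S.leftDvd s m ∧ S.leftDvd t m) → ∃ Δ, S.IsRightLcm s t Δ)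
    (hclo : ∀ s ∈ S.atoms, ∀ t ∈ S.atoms, ∀ Δ a : P, S.IsRightLcm s t Δ →
      (S.mul a s).isSome → (S.mul a t).isSome → (S.mul a Δ).isSome)
    (hcancel : ∀ t x y m : P, S.mul t x = some m → S.mul t y = some m → x = y) :
    ∀ n (m u v : P), S.len m ≤ n → S.leftDvd u m → S.leftDvd v m →
      ∃ Δ, S.IsRightLcm u v Δ ∧
        ∀ a, (S.mul a u).isSome → (S.mul a v).isSome → (S.mul a Δ).isSome := by
  intro n
  induction n using Nat.strong_induction_on with
  | _ n ih =>
    have atomH : ∀ s ∈ S.atoms, ∀ m v : P, S.len m ≤ n → S.leftDvd s m → S.leftDvd v m →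
        ∃ Δ, S.IsRightLcm s v Δ ∧
          ∀ a, (S.mul a s).isSome → (S.mul a v).isSome → (S.mul a Δ).isSome := by
      intro s hs m v hmn hsm hvm
      by_cases hv1 : v = S.one
      · subst hv1
        exact ⟨s, ⟨leftDvd_refl s, one_leftDvd s, fun w hw _ => hw⟩, fun a has _ => has⟩
      · obtain ⟨t, ht, v', hv'⟩ := exists_atom_decomp (S.len v) v le_rfl hv1
        have htv : S.leftDvd t v := ⟨v', hv'⟩
        have htm : S.leftDvd t m := leftDvd_trans htv hvm
        obtain ⟨Δ₀, ⟨α, hα⟩, ⟨β, hβ⟩, min₀⟩ := hlcm s hs t ht ⟨m, hsm, htm⟩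
        obtain ⟨m₂, hm₂⟩ := htm
        have hv'm₂ : S.leftDvd v' m₂ := leftDvd_fiber hcancel hv' hm₂ hvm
        have hΔ₀m : S.leftDvd Δ₀ m := min₀ m hsm ⟨m₂, hm₂⟩
        have hβm₂ : S.leftDvd β m₂ := leftDvd_fiber hcancel hβ hm₂ hΔ₀m
        have hm₂lt : S.len m₂ < n := by
          have h1 := S.len_mul t m₂ m hm₂
          have h2 := S.len_pos t ht.1
          omega
        obtain ⟨Δ₂, ⟨⟨δ, hδ⟩, ⟨ε, hε⟩, min₂⟩, cl₂⟩ :=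
          ih (S.len m₂) hm₂lt m₂ β v' le_rfl hβm₂ hv'm₂
        obtain ⟨ζ, hζ⟩ := min₂ m₂ hβm₂ hv'm₂
        obtain ⟨Δ, hΔ, -⟩ := massoc₂ hζ hm₂
        have hvΔ : S.leftDvd v Δ := by
          obtain ⟨v'', hv'', hv''ε⟩ := massoc₂ hε hΔ
          rw [← Option.some.inj (hv'.symm.trans hv'')] at hv''ε
          exact ⟨ε, hv''ε⟩
        have hsΔ : S.leftDvd s Δ := by
          obtain ⟨tβ, htβ, htβδ⟩ := massoc₂ hδ hΔ
          rw [← Option.some.inj (hβ.symm.trans htβ)] at htβδ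
          obtain ⟨κ, hκ, hsκ⟩ := massoc₁ hα htβδ
          exact ⟨κ, hsκ⟩
        have hmin : ∀ w, S.leftDvd s w → S.leftDvd v w → S.leftDvd Δ w := by
          intro w hsw hvw
          have htw : S.leftDvd t w := leftDvd_trans htv hvw
          have hΔ₀w : S.leftDvd Δ₀ w := min₀ w hsw htw
          obtain ⟨w₂, hw₂⟩ := htw
          have hv'w₂ : S.leftDvd v' w₂ := leftDvd_fiber hcancel hv' hw₂ hvw
          have hβw₂ : S.leftDvd β w₂ := leftDvd_fiber hcancel hβ hw₂ hΔ₀w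
          obtain ⟨κ, hκ⟩ := min₂ w₂ hβw₂ hv'w₂
          obtain ⟨Δ', hΔ', hΔ'κ⟩ := massoc₂ hκ hw₂
          rw [← Option.some.inj (hΔ.symm.trans hΔ')] at hΔ'κ
          exact ⟨κ, hΔ'κ⟩
        refine ⟨Δ, ⟨hsΔ, hvΔ, hmin⟩, ?_⟩
        intro a has hav
        obtain ⟨av, hav'⟩ := Option.isSome_iff_exists.mp hav
        obtain ⟨at', hat, hatv'⟩ := massoc₂ hv' hav'
        have haΔ₀ : (S.mul a Δ₀).isSome :=
          hclo s hs t ht Δ₀ a ⟨⟨α, hα⟩, ⟨β, hβ⟩, min₀⟩ has (by rw [hat]; rfl)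
        obtain ⟨q, hq⟩ := Option.isSome_iff_exists.mp haΔ₀
        obtain ⟨at'', hat'', hat''β⟩ := massoc₂ hβ hq
        rw [← Option.some.inj (hat.symm.trans hat'')] at hat''β
        have hr : (S.mul at' Δ₂).isSome := cl₂ at' (by rw [hat''β]; rfl) (by rw [hatv']; rfl)
        obtain ⟨r, hr'⟩ := Option.isSome_iff_exists.mp hr
        obtain ⟨tΔ₂, htΔ₂, hatΔ₂⟩ := massoc₁ hat hr'
        rw [← Option.some.inj (hΔ.symm.trans htΔ₂)] at hatΔ₂
        rw [hatΔ₂]; rfl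
    intro m u v hmn hum hvm
    by_cases hu1 : u = S.one
    · subst hu1
      exact ⟨v, ⟨one_leftDvd v, leftDvd_refl v, fun w _ hw => hw⟩, fun a _ hav => hav⟩
    · obtain ⟨s, hs, u', hu'⟩ := exists_atom_decomp (S.len u) u le_rfl hu1
      have hsm : S.leftDvd s m := leftDvd_trans ⟨u', hu'⟩ hum
      obtain ⟨Δ₀, ⟨⟨α, hα⟩, ⟨β, hβ⟩, min₀⟩, cl₀⟩ := atomH s hs m v hmn hsm hvm
      obtain ⟨m₁, hm₁⟩ := hsm
      have hu'm₁ : S.leftDvd u' m₁ := leftDvd_fiber hcancel hu' hm₁ hum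
      have hΔ₀m : S.leftDvd Δ₀ m := min₀ m ⟨m₁, hm₁⟩ hvm
      have hαm₁ : S.leftDvd α m₁ := leftDvd_fiber hcancel hα hm₁ hΔ₀m
      have hm₁lt : S.len m₁ < n := by
        have h1 := S.len_mul s m₁ m hm₁
        have h2 := S.len_pos s hs.1
        omega
      obtain ⟨Δ₁, ⟨⟨δ, hδ⟩, ⟨ε, hε⟩, min₁⟩, cl₁⟩ :=
        ih (S.len m₁) hm₁lt m₁ u' α le_rfl hu'm₁ hαm₁
      obtain ⟨ζ, hζ⟩ := min₁ m₁ hu'm₁ hαm₁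
      obtain ⟨Δ, hΔ, -⟩ := massoc₂ hζ hm₁
      have huΔ : S.leftDvd u Δ := by
        obtain ⟨u'', hu'', hu''δ⟩ := massoc₂ hδ hΔ
        rw [← Option.some.inj (hu'.symm.trans hu'')] at hu''δ
        exact ⟨δ, hu''δ⟩
      have hvΔ : S.leftDvd v Δ := by
        obtain ⟨sα, hsα, hsαε⟩ := massoc₂ hε hΔ
        rw [← Option.some.inj (hα.symm.trans hsα)] at hsαε
        obtain ⟨κ, hκ, hvκ⟩ := massoc₁ hβ hsαε
        exact ⟨κ, hvκ⟩
      have hmin : ∀ w, S.leftDvd u w → S.leftDvd v w → S.leftDvd Δ w := by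
        intro w huw hvw
        have hsw : S.leftDvd s w := leftDvd_trans ⟨u', hu'⟩ huw
        have hΔ₀w : S.leftDvd Δ₀ w := min₀ w hsw hvw
        obtain ⟨w₁, hw₁⟩ := hsw
        have hu'w₁ : S.leftDvd u' w₁ := leftDvd_fiber hcancel hu' hw₁ huw
        have hαw₁ : S.leftDvd α w₁ := leftDvd_fiber hcancel hα hw₁ hΔ₀w
        obtain ⟨κ, hκ⟩ := min₁ w₁ hu'w₁ hαw₁
        obtain ⟨Δ', hΔ', hΔ'κ⟩ := massoc₂ hκ hw₁
        rw [← Option.some.inj (hΔ.symm.trans hΔ')] at hΔ'κ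
        exact ⟨κ, hΔ'κ⟩
      refine ⟨Δ, ⟨huΔ, hvΔ, hmin⟩, ?_⟩
      intro a hau hav
      obtain ⟨au, hau'⟩ := Option.isSome_iff_exists.mp hau
      obtain ⟨as', has, hasu'⟩ := massoc₂ hu' hau'
      have haΔ₀ : (S.mul a Δ₀).isSome := cl₀ a (by rw [has]; rfl) hav
      obtain ⟨q, hq⟩ := Option.isSome_iff_exists.mp haΔ₀
      obtain ⟨as'', has'', has''α⟩ := massoc₂ hα hq
      rw [← Option.some.inj (has.symm.trans has'')] at has''α
      have hr : (S.mul as' Δ₁).isSome := cl₁ as' (by rw [hasu']; rfl) (by rw [has''α]; rfl)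
      obtain ⟨r, hr'⟩ := Option.isSome_iff_exists.mp hr
      obtain ⟨sΔ₁, hsΔ₁, hasΔ₁⟩ := massoc₁ has hr'
      rw [← Option.some.inj (hΔ.symm.trans hsΔ₁)] at hasΔ₁
      rw [hasΔ₁]; rfl

end AtomicPartialProduct

open AtomicPartialProduct in
/-- In a pre-Garside structure, for `a, b ∈ P` there is a unique maximal left
divisor `c` of `b` such that the product `ac` is defined in `P`. -/
theorem exists_unique_max_left_divisor {P : Type*} (G : PreGarside P) (a b : P) :
    ∃! c : P, (G.toAtomicPartialProduct.leftDvd c b ∧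
        (G.toAtomicPartialProduct.mul a c).isSome) ∧
      ∀ c' : P, G.toAtomicPartialProduct.leftDvd c' b →
        (G.toAtomicPartialProduct.mul a c').isSome →
        G.toAtomicPartialProduct.leftDvd c' c := by
  classical
  set S := G.toAtomicPartialProduct with hS
  have hcancel : ∀ t x y m : P, S.mul t x = some m → S.mul t y = some m → x = y :=
    fun t x y m h1 h2 => G.cancel_left (S.ι t) x y (by rw [ι_mul h1, ι_mul h2])
  have hone : S.leftDvd S.one b ∧ (S.mul a S.one).isSome :=
    ⟨one_leftDvd b, by rw [S.mul_one a]; rfl⟩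
  have hne : (S.len '' {c | S.leftDvd c b ∧ (S.mul a c).isSome}).Nonempty :=
    ⟨S.len S.one, S.one, hone, rfl⟩
  have hbdd : BddAbove (S.len '' {c | S.leftDvd c b ∧ (S.mul a c).isSome}) := by
    refine ⟨S.len b, ?_⟩
    rintro k ⟨c, hc, rfl⟩
    exact leftDvd_len_le hc.1
  obtain ⟨c, hcD, hlen⟩ := Nat.sSup_mem hne hbdd
  have hclen : ∀ c', S.leftDvd c' b → (S.mul a c').isSome → S.len c' ≤ S.len c := by
    intro c' h1 h2
    rw [hlen]
    exact le_csSup hbdd ⟨c', ⟨h1, h2⟩, rfl⟩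
  have hmaxc : ∀ c', S.leftDvd c' b → (S.mul a c').isSome → S.leftDvd c' c := by
    intro c' hc'b hac'
    obtain ⟨Δ, ⟨hcΔ, hc'Δ, hminΔ⟩, hcl⟩ :=
      key G.lcm_right G.mul_lcm_defined hcancel (S.len b) b c c' le_rfl hcD.1 hc'b
    have : c = Δ :=
      leftDvd_antisymm_len hcΔ (hclen Δ (hminΔ b hcD.1 hc'b) (hcl a hcD.2 hac'))
    rw [this]
    exact hc'Δ
  refine ⟨c, ⟨⟨hcD.1, hcD.2⟩, hmaxc⟩, ?_⟩
  rintro c'' ⟨⟨h1, h2⟩, hmax''⟩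
  exact leftDvd_antisymm_len (hmaxc c'' h1 h2) (leftDvd_len_le (hmax'' c hcD.1 hcD.2))
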